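/- Let G=(V,E) be a fixed finite undirected tree and let w_n:E→(0,∞) be a sequence of edge weight functions. For each n∈ℕ let q_n>0 be the intensity parameter, and assume that for each edge e∈E the limit of w_n(e)/q_n exists in [0,∞]. Let x,y∈V be two adjacent vertices. Then as n→∞, the two-point correlation U_{q_n}(x,y) (computed in the graph (V,E,w_n)) converges to 0 if q_n = o(w_n(x,y)), and converges to 1 if q_n = ω(w_n(x,y)). -/

import Mathlib

open Classical Finset Filter

noncomputable section

variable {V : Type*} [Fintype V] [DecidableEq V]

/-- One step of following the parent map of a rooted forest. -/
def fstep (f : V → Option V) : Option V → Option V := fun o => o.bind f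

/-- `f : V → Option V` encodes a spanning rooted forest structure: every vertex either is a
root (`f x = none`) or points to its parent, and iterating the parent map from any vertex
eventually reaches a root (i.e. there are no cycles). -/
def IsForest (f : V → Option V) : Prop :=
  ∀ x : V, ∃ n : ℕ, (fstep f)^[n] (some x) = none

/-- `f` is a spanning rooted forest of the directed graph with edge relation `E`:
all its (parent-pointing) edges are edges of the graph. -/
def IsRForest (E : V → V → Prop) (f : V → Option V) : Prop :=
  IsForest f ∧ ∀ x y : V, f x = some y → E x y

/-- The number of roots (equivalently, of trees) of a rooted forest. -/
def nRoots (f : V → Option V) : ℕ := (univ.filter fun x : V => f x = none).card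

/-- The weight `w(F) = ∏_{e ∈ F} w(e)` of a rooted forest. -/
def fWeight (w : V → V → ℝ) (f : V → Option V) : ℝ :=
  ∏ x : V, (f x).elim 1 (fun y => w x y)

/-- Non-normalised forest measure of a set `H` of forests: `∑_{F ∈ H} q^{r(F)} w(F)`,
the sum running over spanning rooted forests of the graph belonging to `H`. -/
def fMeasure (E : V → V → Prop) (w : V → V → ℝ) (q : ℝ) (H : Set (V → Option V)) : ℝ :=
  ∑ f ∈ univ.filter (fun f : V → Option V => IsRForest E f ∧ f ∈ H),
    q ^ nRoots f * fWeight w f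

/-- Partition function `Z(q) = ∑_F q^{r(F)} w(F)`. -/
def Zf (E : V → V → Prop) (w : V → V → ℝ) (q : ℝ) : ℝ := fMeasure E w q Set.univ

/-- Probability `P(Φ_q ∈ H)` for the random spanning rooted forest `Φ_q`. -/
def fProb (E : V → V → Prop) (w : V → V → ℝ) (q : ℝ) (H : Set (V → Option V)) : ℝ :=
  fMeasure E w q H / Zf E w q

/-- Ancestor relation in the forest `f`. -/
def anc (f : V → Option V) : V → V → Prop :=
  Relation.ReflTransGen (fun a b => f a = some b)

/-- `x` and `y` belong to the same tree of the forest `f` (they have a common ancestor). -/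
def SameTree (f : V → Option V) (x y : V) : Prop := ∃ z, anc f x z ∧ anc f y z

/-- Two-point correlation `U_q(x,y)`: the probability that `x` and `y` lie in
different trees of `Φ_q`. -/
def Ucorr (E : V → V → Prop) (w : V → V → ℝ) (q : ℝ) (x y : V) : ℝ :=
  fProb E w q {f | ¬ SameTree f x y}

end
section AuxProofs

open Classical Finset Filter

variable {V : Type*} [Fintype V] [DecidableEq V]

lemma fstep_iterate_none (f : V → Option V) (n : ℕ) : (fstep f)^[n] none = none := by
  induction n with
  | zero => rfl
  | succ n ih => rw [Function.iterate_succ_apply]; exact ih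

lemma fstep_some (f : V → Option V) (a : V) : fstep f (some a) = f a := rfl

lemma anc_iff_iterate {f : V → Option V} {a b : V} :
    anc f a b ↔ ∃ n, (fstep f)^[n] (some a) = some b := by
  constructor
  · intro h
    induction h with
    | refl => exact ⟨0, rfl⟩
    | tail _ hbc ih =>
      obtain ⟨n, hn⟩ := ih
      exact ⟨n + 1, by rw [Function.iterate_succ_apply', hn, fstep_some]; exact hbc⟩
  · rintro ⟨n, hn⟩
    induction n generalizing a with
    | zero =>
      simp only [Function.iterate_zero_apply, Option.some.injEq] at hn
      subst hn; exact Relation.ReflTransGen.refl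
    | succ n ih =>
      rw [Function.iterate_succ_apply, fstep_some] at hn
      cases hfa : f a with
      | none => rw [hfa, fstep_iterate_none] at hn; cases hn
      | some c =>
        rw [hfa] at hn
        exact Relation.ReflTransGen.head hfa (ih hn)

/-- No cycles in a parent map. -/
def NoCyc (f : V → Option V) : Prop := ∀ a b, f a = some b → ¬ anc f b a

lemma IsForest.noCyc {f : V → Option V} (hf : IsForest f) : NoCyc f := by
  intro a b hab hba
  obtain ⟨m, hm⟩ := anc_iff_iterate.1 hba
  have hcyc : (fstep f)^[m + 1] (some a) = some a := by
    rw [Function.iterate_succ_apply, fstep_some, hab, hm]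
  obtain ⟨n, hn⟩ := hf a
  have key : ∀ k, (fstep f)^[k * (m + 1)] (some a) = some a := by
    intro k
    induction k with
    | zero => simp
    | succ k ih => rw [Nat.succ_mul, Function.iterate_add_apply, hcyc, ih]
  have h2 : (fstep f)^[n * (m + 1)] (some a) = none := by
    have he : n * (m + 1) = n * m + n := by ring
    rw [he, Function.iterate_add_apply, hn, fstep_iterate_none]
  rw [key n] at h2
  cases h2

lemma noCyc_isForest {f : V → Option V} (hf : NoCyc f) : IsForest f := by
  intro x
  by_contra hc
  push_neg at hc
  obtain ⟨i, j, hij, heq⟩ := Finite.exists_ne_map_eq_of_infinite (fun n => (fstep f)^[n] (some x))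
  have key : ∀ i j : ℕ, i < j → (fstep f)^[i] (some x) = (fstep f)^[j] (some x) → False := by
    intro i j hlt heq
    obtain ⟨b, hb⟩ := Option.ne_none_iff_exists'.1 (hc i)
    obtain ⟨k, hk⟩ : ∃ k, j = (k + 1) + i := ⟨j - i - 1, by omega⟩
    have h1 : (fstep f)^[k + 1] (some b) = some b := by
      rw [← hb, ← Function.iterate_add_apply, ← hk, ← heq, hb]
    cases hfb : f b with
    | none =>
      rw [Function.iterate_succ_apply, fstep_some, hfb, fstep_iterate_none] at h1
      cases h1
    | some c =>
      rw [Function.iterate_succ_apply, fstep_some, hfb] at h1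
      exact hf b c hfb (anc_iff_iterate.2 ⟨k, h1⟩)
  rcases lt_or_gt_of_ne hij with h | h
  · exact key i j h heq
  · exact key j i h heq.symm

lemma anc_mono {f g : V → Option V} (h : ∀ a b, g a = some b → f a = some b) {a b : V}
    (hab : anc g a b) : anc f a b :=
  Relation.ReflTransGen.mono h _ _ hab

lemma anc_eq_of_none {f : V → Option V} {a c : V} (ha : f a = none) (h : anc f a c) : a = c := by
  rcases Relation.ReflTransGen.cases_head h with rfl | ⟨b, hb, -⟩
  · rfl
  · rw [ha] at hb; cases hb

lemma detach {f : V → Option V} {c d : V} (hf : IsForest f) (hc : f c = some d) :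
    IsForest (Function.update f c none) ∧
    (∀ a b, Function.update f c none a = some b → f a = some b) ∧
    nRoots (Function.update f c none) = nRoots f + 1 ∧
    ∀ w' : V → V → ℝ, fWeight w' f = w' c d * fWeight w' (Function.update f c none) := by
  set g := Function.update f c none with hg
  have hsub : ∀ a b, g a = some b → f a = some b := by
    intro a b hab
    by_cases h : a = c
    · subst h; rw [hg, Function.update_self] at hab; cases hab
    · rwa [hg, Function.update_of_ne h] at hab
  refine ⟨noCyc_isForest ?_, hsub, ?_, ?_⟩
  · intro a b hab hba
    exact hf.noCyc a b (hsub a b hab) (anc_mono hsub hba)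
  · have hset : (univ.filter fun a : V => g a = none)
        = insert c (univ.filter fun a : V => f a = none) := by
      ext a
      simp only [mem_filter, mem_univ, true_and, mem_insert]
      by_cases h : a = c
      · subst h; simp [hg, Function.update_self]
      · simp [hg, Function.update_of_ne h, h]
    have hc' : c ∉ (univ.filter fun a : V => f a = none) := by simp [hc]
    unfold nRoots
    rw [hset, card_insert_of_notMem hc']
  · intro w'
    unfold fWeight
    rw [← Finset.mul_prod_erase univ (fun a => (f a).elim 1 fun y => w' a y) (mem_univ c),
        ← Finset.mul_prod_erase univ (fun a => (g a).elim 1 fun y => w' a y) (mem_univ c)]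
    have h1 : (f c).elim 1 (fun y => w' c y) = w' c d := by rw [hc]; rfl
    have h2 : (g c).elim 1 (fun y => w' c y) = 1 := by rw [hg, Function.update_self]; rfl
    have h3 : ∏ a ∈ univ.erase c, (g a).elim 1 (fun y => w' a y)
        = ∏ a ∈ univ.erase c, (f a).elim 1 (fun y => w' a y) :=
      Finset.prod_congr rfl fun a ha => by
        rw [hg, Function.update_of_ne (Finset.mem_erase.1 ha).1]
    rw [h1, h2, h3, one_mul]

lemma attach_claimA {f : V → Option V} {x y : V} (hx : f x = none) (hyx : ¬ anc f y x) :
    ∀ a c, anc (Function.update f x (some y)) a c → anc f a c ∨ (anc f a x ∧ anc f y c) := by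
  set g := Function.update f x (some y) with hg
  intro a c h
  induction h using Relation.ReflTransGen.head_induction_on with
  | refl => exact Or.inl Relation.ReflTransGen.refl
  | @head a d h' hrest ih =>
    by_cases hax : a = x
    · subst hax
      rw [hg, Function.update_self] at h'
      injection h' with h'
      subst h'
      rcases ih with h1 | ⟨h1, h2⟩
      · exact Or.inr ⟨Relation.ReflTransGen.refl, h1⟩
      · exact absurd h1 hyx
    · rw [hg, Function.update_of_ne hax] at h'
      rcases ih with h1 | ⟨h1, h2⟩
      · exact Or.inl (Relation.ReflTransGen.head h' h1)
      · exact Or.inr ⟨Relation.ReflTransGen.head h' h1, h2⟩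

lemma attachF {f : V → Option V} {x y : V} (hf : IsForest f) (hx : f x = none)
    (hyx : ¬ anc f y x) :
    IsForest (Function.update f x (some y)) ∧
    nRoots (Function.update f x (some y)) + 1 = nRoots f ∧
    ∀ w' : V → V → ℝ, fWeight w' (Function.update f x (some y)) = w' x y * fWeight w' f := by
  set g := Function.update f x (some y) with hg
  have hedge : ∀ a b, g a = some b → (a = x ∧ b = y) ∨ f a = some b := by
    intro a b hab
    by_cases h : a = x
    · subst h; rw [hg, Function.update_self] at hab
      injection hab with h'
      exact Or.inl ⟨rfl, h'.symm⟩
    · right; rwa [hg, Function.update_of_ne h] at hab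
  refine ⟨noCyc_isForest ?_, ?_, ?_⟩
  · intro a b hab hba
    rcases attach_claimA hx hyx b a hba with h1 | ⟨h1, h2⟩
    · rcases hedge a b hab with ⟨rfl, rfl⟩ | hfab
      · exact hyx h1
      · exact hf.noCyc a b hfab h1
    · rcases hedge a b hab with ⟨rfl, rfl⟩ | hfab
      · exact hyx h1
      · exact hyx (h2.trans (Relation.ReflTransGen.head hfab h1))
  · have hset : (univ.filter fun a : V => f a = none)
        = insert x (univ.filter fun a : V => g a = none) := by
      ext a
      simp only [mem_filter, mem_univ, true_and, mem_insert]
      by_cases h : a = x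
      · subst h; simp [hx]
      · simp [hg, Function.update_of_ne h, h]
    have hx' : x ∉ (univ.filter fun a : V => g a = none) := by
      simp [hg, Function.update_self]
    unfold nRoots
    rw [hset, card_insert_of_notMem hx']
  · intro w'
    unfold fWeight
    rw [← Finset.mul_prod_erase univ (fun a => (f a).elim 1 fun y => w' a y) (mem_univ x),
        ← Finset.mul_prod_erase univ (fun a => (g a).elim 1 fun y => w' a y) (mem_univ x)]
    have h1 : (f x).elim 1 (fun y => w' x y) = 1 := by rw [hx]; rfl
    have h2 : (g x).elim 1 (fun y => w' x y) = w' x y := by rw [hg, Function.update_self]; rfl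
    have h3 : ∏ a ∈ univ.erase x, (g a).elim 1 (fun y => w' a y)
        = ∏ a ∈ univ.erase x, (f a).elim 1 (fun y => w' a y) :=
      Finset.prod_congr rfl fun a ha => by
        rw [hg, Function.update_of_ne (Finset.mem_erase.1 ha).1]
    rw [h1, h2, h3, one_mul]

lemma reroot {E' : V → V → Prop} (hEsym : ∀ a b, E' a b → E' b a)
    (w' : V → V → ℝ) (hwsym : ∀ a b, w' a b = w' b a) :
    ∀ (n : ℕ) (f : V → Option V) (x : V), IsForest f → (∀ a b, f a = some b → E' a b) →
      (fstep f)^[n] (some x) = none →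
      ∃ g, IsForest g ∧ (∀ a b, g a = some b → E' a b) ∧ g x = none ∧
        nRoots g = nRoots f ∧ fWeight w' g = fWeight w' f ∧
        (∀ a, anc g a x → SameTree f a x) ∧ (∀ a, ¬ anc f x a → g a = f a) := by
  intro n
  induction n with
  | zero =>
    intro f x _ _ h
    simp only [Function.iterate_zero_apply] at h
    cases h
  | succ n ih =>
    intro f x hf hE hiter
    cases hfx : f x with
    | none =>
      exact ⟨f, hf, hE, hfx, rfl, rfl, fun a ha => ⟨x, ha, Relation.ReflTransGen.refl⟩,
        fun a _ => rfl⟩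
    | some p =>
      have hpx : ¬ anc f p x := hf.noCyc x p hfx
      have hiter' : (fstep f)^[n] (some p) = none := by
        rwa [Function.iterate_succ_apply, fstep_some, hfx] at hiter
      obtain ⟨g₁, hg₁f, hg₁E, hg₁p, hg₁r, hg₁w, hg₁anc, hg₁fix⟩ := ih f p hf hE hiter'
      have hxp : x ≠ p := by rintro rfl; exact hpx Relation.ReflTransGen.refl
      have hg₁x : g₁ x = some p := by rw [hg₁fix x hpx]; exact hfx
      obtain ⟨hg₂f, hg₂sub, hg₂r, hg₂w⟩ := detach hg₁f hg₁x
      set g₂ := Function.update g₁ x none with hg₂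
      have hg₂p : g₂ p = none := by
        rw [hg₂, Function.update_of_ne (Ne.symm hxp)]; exact hg₁p
      have hxg₂ : ¬ anc g₂ x p := fun h =>
        hxp (anc_eq_of_none (by rw [hg₂, Function.update_self]) h)
      obtain ⟨hgf, hgr, hgw⟩ := attachF hg₂f hg₂p hxg₂
      set g := Function.update g₂ p (some x) with hgdef
      refine ⟨g, hgf, ?_, ?_, ?_, ?_, ?_, ?_⟩
      · intro a b hab
        by_cases h : a = p
        · subst h; rw [hgdef, Function.update_self] at hab
          injection hab with h'
          subst h'
          exact hEsym x _ (hE x _ hfx)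
        · rw [hgdef, Function.update_of_ne h] at hab
          exact hg₁E a b (hg₂sub a b hab)
      · rw [hgdef, Function.update_of_ne hxp, hg₂, Function.update_self]
      · omega
      · calc fWeight w' g = w' p x * fWeight w' g₂ := hgw w'
          _ = w' x p * fWeight w' g₂ := by rw [hwsym p x]
          _ = fWeight w' g₁ := (hg₂w w').symm
          _ = fWeight w' f := hg₁w
      · intro a ha
        have key : anc g₁ a p → SameTree f a x := by
          intro h3
          obtain ⟨z, haz, hpz⟩ := hg₁anc a h3
          exact ⟨z, haz, Relation.ReflTransGen.head hfx hpz⟩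
        rcases attach_claimA hg₂p hxg₂ a x ha with h1 | ⟨h1, -⟩
        · exact key ((anc_mono hg₂sub h1).tail hg₁x)
        · exact key (anc_mono hg₂sub h1)
      · intro a ha
        have hax : a ≠ x := fun h => ha (h ▸ Relation.ReflTransGen.refl)
        have hap : a ≠ p := fun h => ha (h ▸ Relation.ReflTransGen.single hfx)
        rw [hgdef, Function.update_of_ne hap, hg₂, Function.update_of_ne hax]
        exact hg₁fix a fun h => ha (Relation.ReflTransGen.head hfx h)

lemma fWeight_pos {E' : V → V → Prop} {w' : V → V → ℝ} (hw : ∀ a b, E' a b → 0 < w' a b)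
    {f : V → Option V} (hE : ∀ a b, f a = some b → E' a b) : 0 < fWeight w' f := by
  unfold fWeight
  apply Finset.prod_pos
  intro a _
  cases hfa : f a with
  | none => simp
  | some b => simpa using hw a b (hE a b hfa)

lemma fMeasure_nonneg {E' : V → V → Prop} {w' : V → V → ℝ} (hw : ∀ a b, E' a b → 0 < w' a b)
    {q' : ℝ} (hq' : 0 < q') (H : Set (V → Option V)) : 0 ≤ fMeasure E' w' q' H := by
  apply Finset.sum_nonneg
  intro f hf
  obtain ⟨hf1, -⟩ := (mem_filter.1 hf).2
  exact le_of_lt (mul_pos (pow_pos hq' _) (fWeight_pos hw hf1.2))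

lemma term_le_Zf {E' : V → V → Prop} {w' : V → V → ℝ} (hw : ∀ a b, E' a b → 0 < w' a b)
    {q' : ℝ} (hq' : 0 < q') {g : V → Option V} (hg : IsRForest E' g) :
    q' ^ nRoots g * fWeight w' g ≤ Zf E' w' q' := by
  unfold Zf fMeasure
  rw [Finset.sum_filter]
  refine le_trans ?_ (Finset.single_le_sum (fun f _ => ?_) (Finset.mem_univ g))
  · rw [if_pos ⟨hg, Set.mem_univ g⟩]
  · split_ifs with h
    · exact le_of_lt (mul_pos (pow_pos hq' _) (fWeight_pos hw h.1.2))
    · exact le_refl 0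

lemma Zf_pos {E' : V → V → Prop} {w' : V → V → ℝ} (hw : ∀ a b, E' a b → 0 < w' a b)
    {q' : ℝ} (hq' : 0 < q') : 0 < Zf E' w' q' := by
  have hroot : IsRForest E' (fun _ : V => none) := by
    refine ⟨fun a => ⟨1, ?_⟩, fun a b h => by cases h⟩
    simp [fstep]
  calc (0 : ℝ) < q' ^ nRoots (fun _ : V => none) * fWeight w' (fun _ : V => none) := by
        refine mul_pos (pow_pos hq' _) (fWeight_pos hw hroot.2)
    _ ≤ Zf E' w' q' := term_le_Zf hw hq' hroot

lemma fMeasure_split (E' : V → V → Prop) (w' : V → V → ℝ) (q' : ℝ)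
    (P : (V → Option V) → Prop) :
    fMeasure E' w' q' {f | ¬ P f} + fMeasure E' w' q' {f | P f} = Zf E' w' q' := by
  unfold Zf fMeasure
  rw [Finset.sum_filter, Finset.sum_filter, Finset.sum_filter, ← Finset.sum_add_distrib]
  apply Finset.sum_congr rfl
  intro f _
  by_cases h1 : IsRForest E' f
  · by_cases h2 : P f
    · rw [if_neg (fun h => h.2 h2), if_pos ⟨h1, h2⟩, if_pos ⟨h1, Set.mem_univ f⟩, zero_add]
    · rw [if_pos ⟨h1, h2⟩, if_neg (fun h => h2 h.2), if_pos ⟨h1, Set.mem_univ f⟩, add_zero]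
  · rw [if_neg (fun h => h1 h.1), if_neg (fun h => h1 h.1), if_neg (fun h => h1 h.1), add_zero]

lemma anc_walk {G : SimpleGraph V} {f : V → Option V} (hE : ∀ a b, f a = some b → G.Adj a b)
    {a z : V} (h : anc f a z) :
    ∃ p : G.Walk a z, ∀ e ∈ p.edges, ∃ u v, f u = some v ∧ e = s(u, v) := by
  induction h using Relation.ReflTransGen.head_induction_on with
  | refl => exact ⟨SimpleGraph.Walk.nil, by simp⟩
  | @head a c h' hrest ih =>
    obtain ⟨p, hp⟩ := ih
    refine ⟨SimpleGraph.Walk.cons (hE a c h') p, ?_⟩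
    intro e he
    rw [SimpleGraph.Walk.edges_cons, List.mem_cons] at he
    rcases he with rfl | he
    · exact ⟨a, c, h', rfl⟩
    · exact hp e he

lemma sameTree_edge {G : SimpleGraph V} (hac : G.IsAcyclic) {f : V → Option V}
    (hE : ∀ a b, f a = some b → G.Adj a b) {x y : V} (hadj : G.Adj x y)
    (h : SameTree f x y) : f x = some y ∨ f y = some x := by
  obtain ⟨z, hxz, hyz⟩ := h
  obtain ⟨px, hpx⟩ := anc_walk hE hxz
  obtain ⟨py, hpy⟩ := anc_walk hE hyz
  have hW : s(x, y) ∈ (px.append py.reverse).edges := by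
    have h1 : (px.append py.reverse).toPath = SimpleGraph.Path.singleton hadj :=
      hac.path_unique _ _
    have h2 : s(x, y) ∈ ((px.append py.reverse).toPath : G.Walk x y).edges := by
      rw [h1]
      exact SimpleGraph.Path.mk'_mem_edges_singleton hadj
    exact SimpleGraph.Walk.edges_toPath_subset _ h2
  rw [SimpleGraph.Walk.edges_append, List.mem_append] at hW
  rcases hW with hW | hW
  · obtain ⟨u, v, huv, he⟩ := hpx _ hW
    rcases Sym2.eq_iff.1 he.symm with ⟨rfl, rfl⟩ | ⟨rfl, rfl⟩
    · exact Or.inl huv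
    · exact Or.inr huv
  · rw [SimpleGraph.Walk.edges_reverse, List.mem_reverse] at hW
    obtain ⟨u, v, huv, he⟩ := hpy _ hW
    rcases Sym2.eq_iff.1 he.symm with ⟨rfl, rfl⟩ | ⟨rfl, rfl⟩
    · exact Or.inl huv
    · exact Or.inr huv

end AuxProofs
open Filter Asymptotics in
/-- **Asymptotic correlation in undirected trees with a bounded number of vertices.**
`G = (V,E)` is a fixed finite undirected tree, `w_n : E → (0,∞)` a sequence of (symmetric)
edge weight functions, `q_n > 0` intensity parameters such that `w_n(e)/q_n` converges in
`[0,∞]` for every edge `e`, and `x, y` adjacent vertices. Then `U_{q_n}(x,y) → 0` if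
`q_n = o(w_n(x,y))` and `U_{q_n}(x,y) → 1` if `q_n = ω(w_n(x,y))`. -/
theorem tree_bounded_vertices_asymptotics {V : Type*} [Fintype V] [DecidableEq V]
    (G : SimpleGraph V) (htree : G.IsTree)
    (w : ℕ → V → V → ℝ)
    (hsymm : ∀ n a b, w n a b = w n b a)
    (hpos : ∀ n a b, G.Adj a b → 0 < w n a b)
    (q : ℕ → ℝ) (hq : ∀ n, 0 < q n)
    (hlim : ∀ a b, G.Adj a b → ∃ l : ENNReal,
      Tendsto (fun n => ENNReal.ofReal (w n a b / q n)) atTop (nhds l))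
    (x y : V) (hadj : G.Adj x y) :
    ((q =o[atTop] fun n => w n x y) →
      Tendsto (fun n => Ucorr G.Adj (w n) (q n) x y) atTop (nhds 0)) ∧
    (((fun n => w n x y) =o[atTop] q) →
      Tendsto (fun n => Ucorr G.Adj (w n) (q n) x y) atTop (nhds 1)) := by
  classical
  set C : ℝ := (Fintype.card (V → Option V) : ℝ) with hC
  have hwpos : ∀ n, 0 < w n x y := fun n => hpos n x y hadj
  have hZpos : ∀ n, 0 < Zf G.Adj (w n) (q n) := fun n => Zf_pos (hpos n) (hq n)
  have hsplit : ∀ n, fMeasure G.Adj (w n) (q n) {f | ¬ SameTree f x y}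
      + fMeasure G.Adj (w n) (q n) {f | SameTree f x y} = Zf G.Adj (w n) (q n) :=
    fun n => fMeasure_split _ _ _ _
  have key1 : ∀ n, fMeasure G.Adj (w n) (q n) {f | ¬ SameTree f x y} * w n x y
      ≤ C * q n * Zf G.Adj (w n) (q n) := by
    intro n
    have hperterm : ∀ f : V → Option V, IsRForest G.Adj f → ¬ SameTree f x y →
        (q n ^ nRoots f * fWeight (w n) f) * w n x y ≤ q n * Zf G.Adj (w n) (q n) := by
      intro f hfor hnst
      obtain ⟨m, hm⟩ := hfor.1 x
      obtain ⟨g, hgf, hgE, hgx, hgr, hgw, hganc, -⟩ :=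
        reroot (E' := G.Adj) (fun a b h => h.symm) (w n) (hsymm n) m f x hfor.1 hfor.2 hm
      have hyx : ¬ anc g y x := by
        intro h
        obtain ⟨z, h1, h2⟩ := hganc y h
        exact hnst ⟨z, h2, h1⟩
      obtain ⟨hg'f, hg'r, hg'w⟩ := attachF hgf hgx hyx
      have hg'E : ∀ a b, Function.update g x (some y) a = some b → G.Adj a b := by
        intro a b hab
        by_cases h : a = x
        · subst h
          rw [Function.update_self] at hab
          injection hab with h'
          subst h'
          exact hadj
        · rw [Function.update_of_ne h] at hab
          exact hgE a b hab
      have hterm : q n ^ nRoots (Function.update g x (some y))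
            * fWeight (w n) (Function.update g x (some y)) ≤ Zf G.Adj (w n) (q n) :=
        term_le_Zf (hpos n) (hq n) ⟨hg'f, hg'E⟩
      calc (q n ^ nRoots f * fWeight (w n) f) * w n x y
          = q n ^ (nRoots (Function.update g x (some y)) + 1) * fWeight (w n) f * w n x y := by
            rw [hg'r, hgr]
        _ = q n * (q n ^ nRoots (Function.update g x (some y))
              * (w n x y * fWeight (w n) f)) := by ring
        _ = q n * (q n ^ nRoots (Function.update g x (some y))
              * (w n x y * fWeight (w n) g)) := by rw [hgw]
        _ = q n * (q n ^ nRoots (Function.update g x (some y))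
              * fWeight (w n) (Function.update g x (some y))) := by rw [hg'w (w n)]
        _ ≤ q n * Zf G.Adj (w n) (q n) :=
            mul_le_mul_of_nonneg_left hterm (le_of_lt (hq n))
    unfold fMeasure
    rw [Finset.sum_mul, Finset.sum_filter]
    refine le_trans (Finset.sum_le_sum
      (g := fun _ : V → Option V => q n * Zf G.Adj (w n) (q n)) fun f _ => ?_) ?_
    · split_ifs with h
      · exact hperterm f h.1 h.2
      · exact mul_nonneg (le_of_lt (hq n)) (le_of_lt (hZpos n))
    · rw [Finset.sum_const, Finset.card_univ, nsmul_eq_mul, ← mul_assoc, hC]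
  have key2 : ∀ n, fMeasure G.Adj (w n) (q n) {f | SameTree f x y} * q n
      ≤ C * w n x y * Zf G.Adj (w n) (q n) := by
    intro n
    have hperterm : ∀ f : V → Option V, IsRForest G.Adj f → SameTree f x y →
        (q n ^ nRoots f * fWeight (w n) f) * q n ≤ w n x y * Zf G.Adj (w n) (q n) := by
      intro f hfor hst
      have hedge : ∃ c d, f c = some d ∧ w n c d = w n x y := by
        rcases sameTree_edge htree.IsAcyclic hfor.2 hadj hst with h | h
        · exact ⟨x, y, h, rfl⟩
        · exact ⟨y, x, h, hsymm n y x⟩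
      obtain ⟨c, d, hcd, hwcd⟩ := hedge
      obtain ⟨hgf, hgsub, hgr, hgw⟩ := detach hfor.1 hcd
      have hgE : ∀ a b, Function.update f c none a = some b → G.Adj a b :=
        fun a b hab => hfor.2 a b (hgsub a b hab)
      have hterm : q n ^ nRoots (Function.update f c none)
            * fWeight (w n) (Function.update f c none) ≤ Zf G.Adj (w n) (q n) :=
        term_le_Zf (hpos n) (hq n) ⟨hgf, hgE⟩
      calc (q n ^ nRoots f * fWeight (w n) f) * q n
          = q n ^ (nRoots f + 1) * fWeight (w n) f := by ring
        _ = q n ^ nRoots (Function.update f c none) * fWeight (w n) f := by rw [hgr]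
        _ = q n ^ nRoots (Function.update f c none)
              * (w n c d * fWeight (w n) (Function.update f c none)) := by rw [← hgw (w n)]
        _ = w n x y * (q n ^ nRoots (Function.update f c none)
              * fWeight (w n) (Function.update f c none)) := by rw [hwcd]; ring
        _ ≤ w n x y * Zf G.Adj (w n) (q n) :=
            mul_le_mul_of_nonneg_left hterm (le_of_lt (hwpos n))
    unfold fMeasure
    rw [Finset.sum_mul, Finset.sum_filter]
    refine le_trans (Finset.sum_le_sum
      (g := fun _ : V → Option V => w n x y * Zf G.Adj (w n) (q n)) fun f _ => ?_) ?_
    · split_ifs with h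
      · exact hperterm f h.1 h.2
      · exact mul_nonneg (le_of_lt (hwpos n)) (le_of_lt (hZpos n))
    · rw [Finset.sum_const, Finset.card_univ, nsmul_eq_mul, ← mul_assoc, hC]
  constructor
  · intro hsmall
    have hdiv : Tendsto (fun n => q n / w n x y) atTop (nhds 0) :=
      (Asymptotics.isLittleO_iff_tendsto fun n h =>
        absurd h (ne_of_gt (hwpos n))).1 hsmall
    have hupper : Tendsto (fun n => C * (q n / w n x y)) atTop (nhds 0) := by
      simpa using hdiv.const_mul C
    refine tendsto_of_tendsto_of_tendsto_of_le_of_le tendsto_const_nhds hupper ?_ ?_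
    · intro n
      exact div_nonneg (fMeasure_nonneg (hpos n) (hq n) _) (le_of_lt (hZpos n))
    · intro n
      show fMeasure G.Adj (w n) (q n) {f | ¬ SameTree f x y} / Zf G.Adj (w n) (q n)
        ≤ C * (q n / w n x y)
      rw [div_le_iff₀ (hZpos n)]
      refine le_of_mul_le_mul_right ?_ (hwpos n)
      calc fMeasure G.Adj (w n) (q n) {f | ¬ SameTree f x y} * w n x y
          ≤ C * q n * Zf G.Adj (w n) (q n) := key1 n
        _ = C * (q n / w n x y * w n x y) * Zf G.Adj (w n) (q n) := by
            rw [div_mul_cancel₀ _ (ne_of_gt (hwpos n))]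
        _ = C * (q n / w n x y) * Zf G.Adj (w n) (q n) * w n x y := by ring
  · intro hbig
    have hdiv : Tendsto (fun n => w n x y / q n) atTop (nhds 0) :=
      (Asymptotics.isLittleO_iff_tendsto fun n h =>
        absurd h (ne_of_gt (hq n))).1 hbig
    have hlow : Tendsto (fun n => 1 - C * (w n x y / q n)) atTop (nhds 1) := by
      have h1 : Tendsto (fun _ : ℕ => (1 : ℝ)) atTop (nhds 1) := tendsto_const_nhds
      simpa using h1.sub (hdiv.const_mul C)
    refine tendsto_of_tendsto_of_tendsto_of_le_of_le hlow tendsto_const_nhds ?_ ?_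
    · intro n
      show 1 - C * (w n x y / q n)
        ≤ fMeasure G.Adj (w n) (q n) {f | ¬ SameTree f x y} / Zf G.Adj (w n) (q n)
      rw [le_div_iff₀ (hZpos n)]
      have hM' : fMeasure G.Adj (w n) (q n) {f | SameTree f x y}
          ≤ C * (w n x y / q n) * Zf G.Adj (w n) (q n) := by
        refine le_of_mul_le_mul_right ?_ (hq n)
        calc fMeasure G.Adj (w n) (q n) {f | SameTree f x y} * q n
            ≤ C * w n x y * Zf G.Adj (w n) (q n) := key2 n
          _ = C * (w n x y / q n * q n) * Zf G.Adj (w n) (q n) := by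
              rw [div_mul_cancel₀ _ (ne_of_gt (hq n))]
          _ = C * (w n x y / q n) * Zf G.Adj (w n) (q n) * q n := by ring
      nlinarith [hsplit n, hZpos n]
    · intro n
      show fMeasure G.Adj (w n) (q n) {f | ¬ SameTree f x y} / Zf G.Adj (w n) (q n) ≤ 1
      rw [div_le_one (hZpos n)]
      have h0 := fMeasure_nonneg (hpos n) (hq n) {f | SameTree f x y}
      linarith [hsplit n]
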